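/- For a continuous function h:[0,1]→ℝ, the bilinear quantity ∫₀¹∫₀¹ K₀(r,s) h(r) h(s) r s dr ds, where K₀(r,s) = ln(1/r) for s ≤ r and ln(1/s) for s ≥ r, equals ∫₀¹ (1/r) (∫₀ʳ s h(s) ds)² dr, and in particular is nonnegative. -/

import Mathlib

open MeasureTheory Set intervalIntegral Filter

noncomputable def auxF (h : ℝ → ℝ) (r : ℝ) : ℝ := ∫ s in (0:ℝ)..r, s * h s
noncomputable def auxG (h : ℝ → ℝ) (r : ℝ) : ℝ := ∫ s in r..(1:ℝ), -(s * Real.log s) * h s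
noncomputable def auxA (h : ℝ → ℝ) (r : ℝ) : ℝ := -Real.log r * auxF h r + auxG h r

section
variable {h : ℝ → ℝ} (hc : ContinuousOn h (Set.Icc 0 1))
include hc

lemma cont1 : ContinuousOn (fun s => s * h s) (Set.Icc 0 1) := continuousOn_id.mul hc

lemma cont2 : ContinuousOn (fun s => -(s * Real.log s) * h s) (Set.Icc 0 1) :=
  (Real.continuous_mul_log.neg.continuousOn).mul hc

lemma int1 {a b : ℝ} (ha : a ∈ Set.Icc (0:ℝ) 1) (hb : b ∈ Set.Icc (0:ℝ) 1) :
    IntervalIntegrable (fun s => s * h s) volume a b :=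
  ((cont1 hc).mono (Set.uIcc_subset_Icc ha hb)).intervalIntegrable

lemma int2 {a b : ℝ} (ha : a ∈ Set.Icc (0:ℝ) 1) (hb : b ∈ Set.Icc (0:ℝ) 1) :
    IntervalIntegrable (fun s => -(s * Real.log s) * h s) volume a b :=
  ((cont2 hc).mono (Set.uIcc_subset_Icc ha hb)).intervalIntegrable

lemma contF : ContinuousOn (auxF h) (Set.Icc 0 1) := by
  have := continuousOn_primitive_interval
    (f := fun s => s * h s) (μ := volume) (a := (0:ℝ)) (b := 1) ?_
  · exact (by simpa [Set.uIcc_of_le (zero_le_one' ℝ)] using this :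
      ContinuousOn (fun r => ∫ s in (0:ℝ)..r, s * h s) (Set.Icc 0 1))
  · rw [Set.uIcc_of_le (zero_le_one' ℝ)]
    exact (cont1 hc).integrableOn_Icc

lemma Geq : ∀ r ∈ Set.Icc (0:ℝ) 1,
    auxG h r = (∫ s in (0:ℝ)..1, -(s * Real.log s) * h s)
      - ∫ s in (0:ℝ)..r, -(s * Real.log s) * h s := by
  intro r hr
  rw [auxG, ← integral_interval_sub_left (int2 hc (Set.left_mem_Icc.2 zero_le_one)
      (Set.right_mem_Icc.2 zero_le_one)) (int2 hc (Set.left_mem_Icc.2 zero_le_one) hr)]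

lemma contG : ContinuousOn (auxG h) (Set.Icc 0 1) := by
  have hP : ContinuousOn (fun r => ∫ s in (0:ℝ)..r, -(s * Real.log s) * h s) (Set.Icc 0 1) := by
    have := continuousOn_primitive_interval
      (f := fun s => -(s * Real.log s) * h s) (μ := volume) (a := (0:ℝ)) (b := 1) ?_
    · simpa [Set.uIcc_of_le (zero_le_one' ℝ)] using this
    · rw [Set.uIcc_of_le (zero_le_one' ℝ)]
      exact (cont2 hc).integrableOn_Icc
  exact (continuousOn_const.sub hP).congr (Geq hc)

omit hc in
lemma hM0 {M : ℝ} (hM : ∀ x ∈ Set.Icc (0:ℝ) 1, ‖h x‖ ≤ M) : 0 ≤ M :=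
  le_trans (norm_nonneg _) (hM 0 ⟨le_refl 0, zero_le_one⟩)

omit hc in
lemma Fbound {M : ℝ} (hM : ∀ x ∈ Set.Icc (0:ℝ) 1, ‖h x‖ ≤ M) :
    ∀ r ∈ Set.Icc (0:ℝ) 1, |auxF h r| ≤ M * r := by
  intro r hr
  have := intervalIntegral.norm_integral_le_of_norm_le_const (C := M)
    (f := fun s => s * h s) (a := 0) (b := r) ?_
  · simpa [abs_of_nonneg hr.1, auxF] using this
  · intro x hx
    rw [Set.uIoc_of_le hr.1] at hx
    have hx1 : x ∈ Set.Icc (0:ℝ) 1 := ⟨hx.1.le, hx.2.trans hr.2⟩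
    have h1 : |x| ≤ 1 := abs_le.2 ⟨by linarith [hx1.1], hx1.2⟩
    calc ‖x * h x‖ = |x| * ‖h x‖ := by rw [norm_mul, Real.norm_eq_abs]
      _ ≤ 1 * M := mul_le_mul h1 (hM x hx1) (norm_nonneg _) zero_le_one
      _ = M := one_mul M

omit hc in
lemma tendA0 {M : ℝ} (hM : ∀ x ∈ Set.Icc (0:ℝ) 1, ‖h x‖ ≤ M) :
    Filter.Tendsto (fun r => -Real.log r * auxF h r) (nhdsWithin 0 (Set.Icc 0 1)) (nhds 0) := by
  apply squeeze_zero_norm' (a := fun r => M * -(r * Real.log r))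
  · filter_upwards [self_mem_nhdsWithin] with r hr
    rcases eq_or_lt_of_le hr.1 with hr0 | hr0
    · simp [← hr0, Real.log_zero]
    · have hlog : Real.log r ≤ 0 := Real.log_nonpos hr0.le hr.2
      have : ‖-Real.log r * auxF h r‖ = -Real.log r * |auxF h r| := by
        rw [norm_mul, Real.norm_eq_abs, Real.norm_eq_abs, abs_neg, abs_of_nonpos hlog]
      rw [this]
      calc -Real.log r * |auxF h r| ≤ -Real.log r * (M * r) :=
            mul_le_mul_of_nonneg_left (Fbound hM r hr) (neg_nonneg.2 hlog)
        _ = M * -(r * Real.log r) := by ring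
  · have := (((continuous_const.mul Real.continuous_mul_log.neg).tendsto 0 : Filter.Tendsto (fun r => M * -(r * Real.log r)) _ _)).mono_left
      (nhdsWithin_le_nhds (s := Set.Icc (0:ℝ) 1))
    convert this using 2 <;> simp

lemma contA : ContinuousOn (auxA h) (Set.Icc 0 1) := by
  obtain ⟨M, hM⟩ := isCompact_Icc.exists_bound_of_continuousOn hc
  intro r hr
  rcases eq_or_ne r 0 with rfl | hr0
  · have hval : auxA h 0 = 0 + auxG h 0 := by simp [auxA, Real.log_zero]
    rw [ContinuousWithinAt, hval]
    exact Filter.Tendsto.add (tendA0 hM) ((contG hc) 0 hr)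
  · exact (((Real.continuousAt_log hr0).neg.continuousWithinAt.mul (contF hc r hr)).add
      ((contG hc) r hr))

lemma derivF {r : ℝ} (hr : r ∈ Set.Ioo (0:ℝ) 1) : HasDerivAt (auxF h) (r * h r) r := by
  have hmem : r ∈ Set.Icc (0:ℝ) 1 := Set.Ioo_subset_Icc_self hr
  have hco : ContinuousOn (fun s => s * h s) (Set.Ioo (0:ℝ) 1) :=
    (cont1 hc).mono Set.Ioo_subset_Icc_self
  have hca : ContinuousAt (fun s => s * h s) r :=
    (cont1 hc).continuousAt (Icc_mem_nhds hr.1 hr.2)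
  exact intervalIntegral.integral_hasDerivAt_right
    (int1 hc (Set.left_mem_Icc.2 zero_le_one) hmem)
    (hco.stronglyMeasurableAtFilter isOpen_Ioo r hr) hca

lemma derivG {r : ℝ} (hr : r ∈ Set.Ioo (0:ℝ) 1) :
    HasDerivAt (auxG h) (-(-(r * Real.log r) * h r)) r := by
  have hmem : r ∈ Set.Icc (0:ℝ) 1 := Set.Ioo_subset_Icc_self hr
  have hco : ContinuousOn (fun s => -(s * Real.log s) * h s) (Set.Ioo (0:ℝ) 1) :=
    (cont2 hc).mono Set.Ioo_subset_Icc_self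
  have hca : ContinuousAt (fun s => -(s * Real.log s) * h s) r :=
    (cont2 hc).continuousAt (Icc_mem_nhds hr.1 hr.2)
  have hP : HasDerivAt (fun u => ∫ s in (0:ℝ)..u, -(s * Real.log s) * h s)
      (-(r * Real.log r) * h r) r :=
    intervalIntegral.integral_hasDerivAt_right
      (int2 hc (Set.left_mem_Icc.2 zero_le_one) hmem)
      (hco.stronglyMeasurableAtFilter isOpen_Ioo r hr) hca
  have := (hasDerivAt_const r (∫ s in (0:ℝ)..1, -(s * Real.log s) * h s)).sub hP
  rw [zero_sub] at this
  apply this.congr_of_eventuallyEq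
  filter_upwards [Icc_mem_nhds hr.1 hr.2] with x hx
  exact Geq hc x hx

lemma derivA {r : ℝ} (hr : r ∈ Set.Ioo (0:ℝ) 1) :
    HasDerivAt (auxA h) (-(auxF h r / r)) r := by
  have hr0 : r ≠ 0 := ne_of_gt hr.1
  have hL : HasDerivAt (fun x => -Real.log x) (-r⁻¹) r := (Real.hasDerivAt_log hr0).neg
  have := (hL.mul (derivF hc hr)).add (derivG hc hr)
  refine this.congr_deriv ?_
  ring

lemma derivFA {r : ℝ} (hr : r ∈ Set.Ioo (0:ℝ) 1) :
    HasDerivAt (fun x => auxF h x * auxA h x)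
      (r * h r * auxA h r - (auxF h r)^2 / r) r := by
  have hr0 : r ≠ 0 := ne_of_gt hr.1
  have := (derivF hc hr).mul (derivA hc hr)
  refine this.congr_deriv ?_
  ring

lemma ftc {ε : ℝ} (hε : ε ∈ Set.Ioc (0:ℝ) 1) :
    ∫ r in ε..1, (r * h r * auxA h r - (auxF h r)^2 / r) = -(auxF h ε * auxA h ε) := by
  have hsub : Set.Icc ε 1 ⊆ Set.Icc (0:ℝ) 1 := Set.Icc_subset_Icc hε.1.le le_rfl
  have hconts : ContinuousOn (fun r => auxF h r * auxA h r) (Set.Icc ε 1) :=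
    ((contF hc).mono hsub).mul ((contA hc).mono hsub)
  have hder : ∀ x ∈ Set.Ioo ε 1, HasDerivAt (fun r => auxF h r * auxA h r)
      (x * h x * auxA h x - (auxF h x)^2 / x) x :=
    fun x hx => derivFA hc ⟨hε.1.trans hx.1, hx.2⟩
  have hint : IntervalIntegrable (fun r => r * h r * auxA h r - (auxF h r)^2 / r) volume ε 1 := by
    apply ContinuousOn.intervalIntegrable
    rw [Set.uIcc_of_le hε.2]
    apply ContinuousOn.sub
    · exact (continuousOn_id.mul (hc.mono hsub)).mul ((contA hc).mono hsub)
    · exact (((contF hc).mono hsub).pow 2).div continuousOn_id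
        (fun x hx => ne_of_gt (lt_of_lt_of_le hε.1 hx.1))
  rw [intervalIntegral.integral_eq_sub_of_hasDerivAt_of_le hε.2 hconts hder hint]
  have hA1 : auxA h 1 = 0 := by
    simp [auxA, auxG, Real.log_one, intervalIntegral.integral_same]
  rw [hA1, mul_zero, zero_sub]

omit hc in
lemma tendsto_tail {f : ℝ → ℝ} (hf : ContinuousOn f (Set.Icc 0 1)) :
    Filter.Tendsto (fun ε => ∫ r in ε..1, f r) (nhdsWithin 0 (Set.Ioc 0 1))
      (nhds (∫ r in (0:ℝ)..1, f r)) := by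
  have hP : ContinuousOn (fun x => ∫ t in (0:ℝ)..x, f t) (Set.Icc 0 1) := by
    have := continuousOn_primitive_interval (f := f) (μ := volume) (a := (0:ℝ)) (b := 1) ?_
    · simpa [Set.uIcc_of_le (zero_le_one' ℝ)] using this
    · rw [Set.uIcc_of_le (zero_le_one' ℝ)]
      exact hf.integrableOn_Icc
  have h0 : Filter.Tendsto (fun ε => ∫ t in (0:ℝ)..ε, f t)
      (nhdsWithin 0 (Set.Icc 0 1)) (nhds 0) := by
    have := hP 0 (Set.left_mem_Icc.2 zero_le_one)
    rw [ContinuousWithinAt] at this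
    simpa [intervalIntegral.integral_same] using this
  have hmono : nhdsWithin (0:ℝ) (Set.Ioc 0 1) ≤ nhdsWithin 0 (Set.Icc 0 1) :=
    nhdsWithin_mono _ Set.Ioc_subset_Icc_self
  have hT : Filter.Tendsto (fun ε => (∫ r in (0:ℝ)..1, f r) - ∫ t in (0:ℝ)..ε, f t)
      (nhdsWithin 0 (Set.Ioc 0 1)) (nhds ((∫ r in (0:ℝ)..1, f r) - 0)) :=
    tendsto_const_nhds.sub (h0.mono_left hmono)
  rw [sub_zero] at hT
  apply hT.congr'
  filter_upwards [self_mem_nhdsWithin] with ε hε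
  have hεI : ε ∈ Set.Icc (0:ℝ) 1 := Set.Ioc_subset_Icc_self hε
  exact integral_interval_sub_left
    ((hf.mono (Set.uIcc_subset_Icc (Set.left_mem_Icc.2 zero_le_one)
      (Set.right_mem_Icc.2 zero_le_one))).intervalIntegrable)
    ((hf.mono (Set.uIcc_subset_Icc (Set.left_mem_Icc.2 zero_le_one) hεI)).intervalIntegrable)

lemma contf1 : ContinuousOn (fun r => r * h r * auxA h r) (Set.Icc 0 1) :=
  (continuousOn_id.mul hc).mul (contA hc)

lemma contf2 : ContinuousOn (fun r => (auxF h r)^2 / r) (Set.Icc 0 1) := by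
  obtain ⟨M, hM⟩ := isCompact_Icc.exists_bound_of_continuousOn hc
  intro r hr
  rcases eq_or_ne r 0 with rfl | hr0
  · have hval : (auxF h 0)^2 / 0 = 0 := by simp
    rw [ContinuousWithinAt, hval]
    apply squeeze_zero_norm' (a := fun x => M^2 * x)
    · filter_upwards [self_mem_nhdsWithin] with x hx
      rcases eq_or_lt_of_le hx.1 with hx0 | hx0
      · simp [← hx0]
      · have hb := Fbound hM x hx
        have hnn : ‖(auxF h x)^2 / x‖ = (auxF h x)^2 / x := by
          rw [Real.norm_eq_abs, abs_of_nonneg (div_nonneg (sq_nonneg _) hx0.le)]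
        rw [hnn]
        have h2 : (auxF h x)^2 ≤ (M * x)^2 := by
          rw [← sq_abs]
          exact pow_le_pow_left₀ (abs_nonneg _) hb 2
        calc (auxF h x)^2 / x ≤ (M * x)^2 / x := by gcongr
          _ = M^2 * x := by field_simp
    · have := ((continuous_const.mul continuous_id).tendsto 0
          : Filter.Tendsto (fun x : ℝ => M^2 * x) _ _).mono_left
        (nhdsWithin_le_nhds (s := Set.Icc (0:ℝ) 1))
      convert this using 2 <;> simp
  · exact (((contF hc) r hr).pow 2).div continuousWithinAt_id hr0

lemma main_eq : ∫ r in (0:ℝ)..1, r * h r * auxA h r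
    = ∫ r in (0:ℝ)..1, (auxF h r)^2 / r := by
  have hne : (nhdsWithin (0:ℝ) (Set.Ioc 0 1)).NeBot := by
    rw [← mem_closure_iff_nhdsWithin_neBot, closure_Ioc (zero_ne_one' ℝ)]
    exact Set.left_mem_Icc.2 zero_le_one
  have T1 := tendsto_tail (contf1 hc)
  have T2 := tendsto_tail (contf2 hc)
  have T3 : Filter.Tendsto (fun ε => auxF h ε * auxA h ε)
      (nhdsWithin (0:ℝ) (Set.Ioc 0 1)) (nhds 0) := by
    have h00 : (0:ℝ) ∈ Set.Icc (0:ℝ) 1 := Set.left_mem_Icc.2 zero_le_one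
    have := ((contF hc 0 h00).mul (contA hc 0 h00))
    rw [ContinuousWithinAt] at this
    have hz : auxF h 0 * auxA h 0 = 0 := by simp [auxF]
    rw [Pi.mul_apply, hz] at this
    exact this.mono_left (nhdsWithin_mono _ Set.Ioc_subset_Icc_self)
  have key : ∀ᶠ ε in nhdsWithin (0:ℝ) (Set.Ioc 0 1),
      ((∫ r in ε..1, (auxF h r)^2 / r) - auxF h ε * auxA h ε)
        = ∫ r in ε..1, r * h r * auxA h r := by
    filter_upwards [self_mem_nhdsWithin] with ε hε
    have hεI : ε ∈ Set.Icc (0:ℝ) 1 := Set.Ioc_subset_Icc_self hε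
    have hu : Set.uIcc ε (1:ℝ) ⊆ Set.Icc 0 1 :=
      Set.uIcc_subset_Icc hεI (Set.right_mem_Icc.2 zero_le_one)
    have i1 : IntervalIntegrable (fun r => r * h r * auxA h r) volume ε 1 :=
      ((contf1 hc).mono hu).intervalIntegrable
    have i2 : IntervalIntegrable (fun r => (auxF h r)^2 / r) volume ε 1 :=
      ((contf2 hc).mono hu).intervalIntegrable
    have hsplit := intervalIntegral.integral_sub i1 i2
    have hftc := ftc hc hε
    rw [hftc] at hsplit
    linarith [hsplit]
  have T2' : Filter.Tendsto (fun ε => (∫ r in ε..1, (auxF h r)^2 / r) - auxF h ε * auxA h ε)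
      (nhdsWithin (0:ℝ) (Set.Ioc 0 1)) (nhds ((∫ r in (0:ℝ)..1, (auxF h r)^2 / r) - 0)) :=
    T2.sub T3
  rw [sub_zero] at T2'
  exact tendsto_nhds_unique T1 (T2'.congr' key)

lemma inner_eq : ∀ r ∈ Set.Icc (0:ℝ) 1,
    (∫ s in (0:ℝ)..1, (if s ≤ r then Real.log (1/r) else Real.log (1/s)) * h r * h s * r * s)
      = r * h r * auxA h r := by
  intro r hr
  rcases eq_or_ne r 0 with rfl | hr0
  · simp
  · have hrpos : 0 < r := lt_of_le_of_ne hr.1 (Ne.symm hr0)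
    have hsub1 : Set.Icc (0:ℝ) r ⊆ Set.Icc 0 1 := Set.Icc_subset_Icc le_rfl hr.2
    have hsub2 : Set.Icc r 1 ⊆ Set.Icc (0:ℝ) 1 := Set.Icc_subset_Icc hr.1 le_rfl
    have e1 : Set.EqOn
        (fun s => (if s ≤ r then Real.log (1/r) else Real.log (1/s)) * h r * h s * r * s)
        (fun s => (Real.log (1/r) * h r * r) * (s * h s)) (Set.Icc 0 r) := by
      intro s hs
      simp only [if_pos hs.2]
      ring
    have e2 : Set.EqOn
        (fun s => (if s ≤ r then Real.log (1/r) else Real.log (1/s)) * h r * h s * r * s)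
        (fun s => (h r * r) * (-(s * Real.log s) * h s)) (Set.Icc r 1) := by
      intro s hs
      simp only []
      split_ifs with hs'
      · have hsr : s = r := le_antisymm hs' hs.1
        subst hsr
        rw [one_div, Real.log_inv]
        ring
      · rw [one_div, Real.log_inv]
        ring
    have c1 : ContinuousOn
        (fun s => (if s ≤ r then Real.log (1/r) else Real.log (1/s)) * h r * h s * r * s)
        (Set.Icc 0 r) :=
      (continuousOn_const.mul ((cont1 hc).mono hsub1)).congr e1
    have c2 : ContinuousOn
        (fun s => (if s ≤ r then Real.log (1/r) else Real.log (1/s)) * h r * h s * r * s)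
        (Set.Icc r 1) :=
      (continuousOn_const.mul ((cont2 hc).mono hsub2)).congr e2
    have i1 : IntervalIntegrable
        (fun s => (if s ≤ r then Real.log (1/r) else Real.log (1/s)) * h r * h s * r * s)
        volume 0 r := by
      apply ContinuousOn.intervalIntegrable
      rwa [Set.uIcc_of_le hr.1]
    have i2 : IntervalIntegrable
        (fun s => (if s ≤ r then Real.log (1/r) else Real.log (1/s)) * h r * h s * r * s)
        volume r 1 := by
      apply ContinuousOn.intervalIntegrable
      rwa [Set.uIcc_of_le hr.2]
    rw [← intervalIntegral.integral_add_adjacent_intervals i1 i2]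
    have v1 : (∫ s in (0:ℝ)..r,
        (if s ≤ r then Real.log (1/r) else Real.log (1/s)) * h r * h s * r * s)
        = (Real.log (1/r) * h r * r) * auxF h r := by
      rw [intervalIntegral.integral_congr
        (g := fun s => (Real.log (1/r) * h r * r) * (s * h s))
        (by rw [Set.uIcc_of_le hr.1]; exact e1)]
      exact intervalIntegral.integral_const_mul _ _
    have v2 : (∫ s in r..(1:ℝ),
        (if s ≤ r then Real.log (1/r) else Real.log (1/s)) * h r * h s * r * s)
        = (h r * r) * auxG h r := by
      rw [intervalIntegral.integral_congr
        (g := fun s => (h r * r) * (-(s * Real.log s) * h s))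
        (by rw [Set.uIcc_of_le hr.2]; exact e2)]
      exact intervalIntegral.integral_const_mul _ _
    rw [v1, v2]
    simp only [auxA, one_div, Real.log_inv]
    ring

end

theorem stmt3 (h : ℝ → ℝ) (hc : ContinuousOn h (Set.Icc 0 1)) :
    (∫ r in (0:ℝ)..1, ∫ s in (0:ℝ)..1,
        (if s ≤ r then Real.log (1/r) else Real.log (1/s)) * h r * h s * r * s)
      = (∫ r in (0:ℝ)..1, (∫ s in (0:ℝ)..r, s * h s)^2 / r) ∧
    0 ≤ ∫ r in (0:ℝ)..1, ∫ s in (0:ℝ)..1,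
        (if s ≤ r then Real.log (1/r) else Real.log (1/s)) * h r * h s * r * s := by
  have hEq : (∫ r in (0:ℝ)..1, ∫ s in (0:ℝ)..1,
      (if s ≤ r then Real.log (1/r) else Real.log (1/s)) * h r * h s * r * s)
      = ∫ r in (0:ℝ)..1, r * h r * auxA h r := by
    apply intervalIntegral.integral_congr
    rw [Set.uIcc_of_le (zero_le_one' ℝ)]
    intro r hr
    exact inner_eq hc r hr
  have hMain := main_eq hc
  have hRHS : (∫ r in (0:ℝ)..1, (auxF h r)^2 / r)
      = ∫ r in (0:ℝ)..1, (∫ s in (0:ℝ)..r, s * h s)^2 / r := rfl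
  constructor
  · rw [hEq, hMain, hRHS]
  · rw [hEq, hMain]
    apply intervalIntegral.integral_nonneg zero_le_one
    intro u hu
    exact div_nonneg (sq_nonneg _) hu.1
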